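/- Let k ≥ 1 and a, b ∈ ℂ^k. Define c ∈ ℂ^k by letting c_j be the coefficient of t^j in the composite polynomial φ_a(φ_b(t)), where φ_a(t) = Σ_{s=1}^k a_s t^s and φ_b(t) = Σ_{s=1}^k b_s t^s, for 1 ≤ j ≤ k. Then M(c) = M(a)·M(b); i.e., the assignment φ ↦ M(coefficients of φ) turns composition of reparametrizations (truncated mod t^{k+1}) into matrix multiplication. -/

import Mathlib

open Polynomial Finset

/-- The matrix `M(a)` with `M(a)_{ij} = Σ_{s_1+⋯+s_i = j, s_l ≥ 1} a_{s_1} ⋯ a_{s_i}`. -/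
noncomputable def Mmat (k : ℕ) (a : Fin k → ℂ) : Matrix (Fin k) (Fin k) ℂ :=
  fun i j =>
    ∑ s ∈ (Finset.Nat.antidiagonalTuple (i.val + 1) (j.val + 1)).filter
        (fun s => ∀ l, 0 < s l),
      ∏ l, (if h : 1 ≤ s l ∧ s l ≤ k then a ⟨s l - 1, by omega⟩ else 0)

/-- The reparametrization `φ(t) = Σ_{s=1}^k a_s t^s`. -/
noncomputable def phiPoly (k : ℕ) (a : Fin k → ℂ) : Polynomial ℂ :=
  ∑ s : Fin k, Polynomial.C (a s) * Polynomial.X ^ (s.val + 1)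

lemma sum_adt_succ {M : Type*} [AddCommMonoid M] {i n : ℕ} (F : (Fin (i+1) → ℕ) → M) :
    ∑ s ∈ Finset.Nat.antidiagonalTuple (i+1) n, F s
      = ∑ pq ∈ Finset.HasAntidiagonal.antidiagonal n,
          ∑ t ∈ Finset.Nat.antidiagonalTuple i pq.2, F (Fin.cons pq.1 t) := by
  rw [Finset.sum_sigma']
  refine Finset.sum_nbij' (i := fun s => ⟨(s 0, ∑ l : Fin i, s l.succ), Fin.tail s⟩)
    (j := fun x => Fin.cons x.1.1 x.2) ?_ ?_ ?_ ?_ ?_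
  · intro s hs
    simp only [Finset.Nat.mem_antidiagonalTuple] at hs
    simp only [Finset.mem_sigma, Finset.HasAntidiagonal.mem_antidiagonal,
      Finset.Nat.mem_antidiagonalTuple]
    refine ⟨?_, ?_⟩
    · rw [← hs, Fin.sum_univ_succ]
    · rfl
  · rintro ⟨⟨p, q⟩, t⟩ hx
    simp only [Finset.mem_sigma, Finset.HasAntidiagonal.mem_antidiagonal,
      Finset.Nat.mem_antidiagonalTuple] at hx
    simp only [Finset.Nat.mem_antidiagonalTuple, Fin.sum_cons, hx.2, hx.1]
  · intro s _; simp [Fin.cons_self_tail]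
  · rintro ⟨⟨p, q⟩, t⟩ hx
    simp only [Finset.mem_sigma, Finset.HasAntidiagonal.mem_antidiagonal,
      Finset.Nat.mem_antidiagonalTuple] at hx
    simp [Fin.cons_succ, Fin.tail_cons, hx.2]
  · intro s _; simp [Fin.cons_self_tail]

lemma coeff_pow_adt (P : Polynomial ℂ) (i j : ℕ) :
    (P ^ i).coeff j
      = ∑ s ∈ Finset.Nat.antidiagonalTuple i j, ∏ l, P.coeff (s l) := by
  induction i generalizing j with
  | zero =>
    cases j with
    | zero => simp
    | succ j => simp [Finset.Nat.antidiagonalTuple_zero_succ, Polynomial.coeff_one]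
  | succ i ih =>
    rw [pow_succ, mul_comm, Polynomial.coeff_mul, sum_adt_succ]
    refine Finset.sum_congr rfl fun pq hpq => ?_
    rw [ih pq.2, Finset.mul_sum]
    refine Finset.sum_congr rfl fun t ht => ?_
    rw [Fin.prod_univ_succ, Fin.cons_zero]
    simp [Fin.cons_succ]

lemma coeff_phiPoly (k : ℕ) (a : Fin k → ℂ) (m : ℕ) :
    (phiPoly k a).coeff m
      = if h : 1 ≤ m ∧ m ≤ k then a ⟨m - 1, by omega⟩ else 0 := by
  unfold phiPoly
  rw [Polynomial.finset_sum_coeff]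
  simp only [Polynomial.coeff_C_mul, Polynomial.coeff_X_pow, mul_ite, mul_one, mul_zero]
  by_cases h : 1 ≤ m ∧ m ≤ k
  · rw [dif_pos h]
    rw [Finset.sum_eq_single (⟨m - 1, by omega⟩ : Fin k)]
    · rw [if_pos (show m = (⟨m - 1, by omega⟩ : Fin k).val + 1 by
        simp only [Fin.val_mk]; omega)]
    · intro s _ hs
      rw [if_neg]
      intro hm
      apply hs
      apply Fin.ext
      simp only [Fin.val_mk]
      omega
    · intro hm; exact absurd (Finset.mem_univ _) hm
  · rw [dif_neg h]
    apply Finset.sum_eq_zero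
    intro s _
    rw [if_neg]
    intro hm
    exact h ⟨by omega, by omega⟩

lemma Mmat_eq_coeff (k : ℕ) (a : Fin k → ℂ) (i j : Fin k) :
    Mmat k a i j = ((phiPoly k a) ^ (i.val + 1)).coeff (j.val + 1) := by
  rw [coeff_pow_adt]
  unfold Mmat
  rw [Finset.sum_filter_of_ne]
  · refine Finset.sum_congr rfl fun s _ => ?_
    refine Finset.prod_congr rfl fun l _ => ?_
    rw [coeff_phiPoly]
  · intro s _ hs l
    by_contra h
    apply hs
    apply Finset.prod_eq_zero (Finset.mem_univ l)
    rw [dif_neg]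
    omega

lemma coeff_pow_eq_zero_of_lt (Q : Polynomial ℂ) (hQ : Q.coeff 0 = 0) {m n : ℕ}
    (h : n < m) : (Q ^ m).coeff n = 0 := by
  have hd : X ∣ Q := Polynomial.X_dvd_iff.mpr hQ
  obtain ⟨R, hR⟩ := pow_dvd_pow_of_dvd hd m
  rw [hR, mul_comm, Polynomial.coeff_mul_X_pow', if_neg (by omega)]

/-- If `c_j` is the coefficient of `t^j` in `φ_a(φ_b(t))`, then `M(c) = M(a) · M(b)`:
the assignment `φ ↦ M(coefficients of φ)` turns composition of reparametrizations
(truncated mod `t^{k+1}`) into matrix multiplication. -/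
theorem Mmat_comp_eq_mul (k : ℕ) (hk : 1 ≤ k) (a b c : Fin k → ℂ)
    (hc : ∀ j : Fin k, c j = ((phiPoly k a).comp (phiPoly k b)).coeff (j.val + 1)) :
    Mmat k c = Mmat k a * Mmat k b := by
  ext i j
  set P := phiPoly k a with hP
  set Q := phiPoly k b with hQ
  have hQ0 : Q.coeff 0 = 0 := by rw [hQ, coeff_phiPoly, dif_neg (by omega)]
  have hP0 : P.coeff 0 = 0 := by rw [hP, coeff_phiPoly, dif_neg (by omega)]
  have hC0 : (P.comp Q).coeff 0 = 0 := by
    rw [Polynomial.coeff_zero_eq_eval_zero, Polynomial.eval_comp,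
      ← Polynomial.coeff_zero_eq_eval_zero, hQ0, ← Polynomial.coeff_zero_eq_eval_zero]
    exact hP0
  -- Step 1 : M(c)_{ij} = coeff of composition power
  have step1 : Mmat k c i j = ((P.comp Q) ^ (i.val + 1)).coeff (j.val + 1) := by
    rw [Mmat_eq_coeff, coeff_pow_adt, coeff_pow_adt]
    refine Finset.sum_congr rfl fun s hs => ?_
    rw [Finset.Nat.mem_antidiagonalTuple] at hs
    refine Finset.prod_congr rfl fun l _ => ?_
    have hsl : s l ≤ j.val + 1 := hs ▸ Finset.single_le_sum
      (f := s) (fun _ _ => Nat.zero_le _) (Finset.mem_univ l)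
    have hjk : j.val + 1 ≤ k := j.2
    rw [coeff_phiPoly]
    by_cases h : 1 ≤ s l ∧ s l ≤ k
    · rw [dif_pos h, hc ⟨s l - 1, by omega⟩]
      congr 1
      simp only []
      omega
    · rw [dif_neg h]
      have : s l = 0 := by omega
      rw [this, hC0]
  rw [step1, ← Polynomial.pow_comp]
  -- Step 2 : expand composition coefficient
  set PP := P ^ (i.val + 1) with hPP
  have expand : (PP.comp Q).coeff (j.val + 1)
      = ∑ e ∈ Finset.range (PP.natDegree + 1),
          PP.coeff e * (Q ^ e).coeff (j.val + 1) := by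
    rw [Polynomial.comp_eq_sum_left]
    rw [Polynomial.sum_over_range PP (f := fun e a => Polynomial.C a * Q ^ e) (fun n => by simp)]
    rw [Polynomial.finset_sum_coeff]
    simp only [Polynomial.coeff_C_mul]
  rw [expand]
  set N := max (PP.natDegree + 1) (k + 1) with hN
  have e1 : ∑ e ∈ Finset.range (PP.natDegree + 1), PP.coeff e * (Q ^ e).coeff (j.val + 1)
      = ∑ e ∈ Finset.range N, PP.coeff e * (Q ^ e).coeff (j.val + 1) := by
    apply Finset.sum_subset (Finset.range_subset_range.mpr (le_max_left _ _))
    intro e _ he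
    rw [Finset.mem_range, not_lt] at he
    rw [Polynomial.coeff_eq_zero_of_natDegree_lt (by omega), zero_mul]
  have e2 : ∑ e ∈ Finset.range (k + 1), PP.coeff e * (Q ^ e).coeff (j.val + 1)
      = ∑ e ∈ Finset.range N, PP.coeff e * (Q ^ e).coeff (j.val + 1) := by
    apply Finset.sum_subset (Finset.range_subset_range.mpr (le_max_right _ _))
    intro e _ he
    rw [Finset.mem_range, not_lt] at he
    have hjk : j.val + 1 ≤ k := j.2
    rw [coeff_pow_eq_zero_of_lt Q hQ0 (by omega), mul_zero]
  rw [e1, ← e2, Finset.sum_range_succ']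
  have h0 : PP.coeff 0 * (Q ^ 0).coeff (j.val + 1) = 0 := by
    rw [pow_zero, Polynomial.coeff_one, if_neg (by omega), mul_zero]
  rw [h0, add_zero, ← Fin.sum_univ_eq_sum_range
    (fun m => PP.coeff (m + 1) * (Q ^ (m + 1)).coeff (j.val + 1)) k]
  rw [Matrix.mul_apply]
  refine Finset.sum_congr rfl fun m _ => ?_
  rw [Mmat_eq_coeff, Mmat_eq_coeff]
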